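/- Let a_1, ..., a_n be positive integers with smallest element s and total sum B, where s and B are both even, and let M = B/2 − s/2. If there exists a subset T ⊆ {1, ..., n} with ∑_{i ∈ T} a_i = B/2, then the multiset {a_1, ..., a_n, −M, −M} can be partitioned into two parts, each containing exactly one copy of −M, such that each part sums to s/2; consequently the minimum over all partitions of this multiset of the sum of squared part sums is at most s²/2. -/
import Mathlib


open Finset

/-- The ground multiset of the reduction: the positive integers `a 1, ..., a n`
(as real numbers) together with two copies of `-M`. -/
noncomputable def ground {n : ℕ} (a : Fin n → ℤ) (M : ℝ) : Multiset ℝ :=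
  (Finset.univ.val.map (fun i => ((a i : ℤ) : ℝ))) + Multiset.replicate 2 (-M)

/-- `parts` is a partition of the multiset `S` into nonempty parts. -/
def IsPartitionOf (parts : Multiset (Multiset ℝ)) (S : Multiset ℝ) : Prop :=
  parts.sum = S ∧ (0 : Multiset ℝ) ∉ parts

/-- The RONE-CC objective: the sum of the squares of the part sums. -/
noncomputable def roneObj (parts : Multiset (Multiset ℝ)) : ℝ :=
  (parts.map (fun C => C.sum ^ 2)).sum

/-- If the positive integers `a i` (smallest element `s`, total sum `B`, both even)
admit a subset summing to `B/2`, then with `M = B/2 - s/2` the multiset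
`{a 1, ..., a n, -M, -M}` splits into two parts, each containing exactly one copy of
`-M` and each summing to `s/2`; consequently the minimum RONE-CC objective is at
most `s²/2`. -/
theorem exists_balanced_two_partition {n : ℕ} (a : Fin n → ℤ) (s B : ℤ) (M : ℝ)
    (hpos : ∀ i, 0 < a i) (hsmem : ∃ i, a i = s) (hsle : ∀ i, s ≤ a i)
    (hB : B = ∑ i, a i) (hseven : Even s) (hBeven : Even B)
    (hM : M = (B : ℝ) / 2 - (s : ℝ) / 2)
    (hT : ∃ T : Finset (Fin n), ∑ i ∈ T, a i = B / 2) :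
    (∃ C₁ C₂ : Multiset ℝ,
      C₁ + C₂ = ground a M ∧
      C₁.count (-M) = 1 ∧ C₂.count (-M) = 1 ∧
      C₁.sum = (s : ℝ) / 2 ∧ C₂.sum = (s : ℝ) / 2) ∧
    ∃ parts : Multiset (Multiset ℝ),
      IsPartitionOf parts (ground a M) ∧ roneObj parts ≤ (s : ℝ) ^ 2 / 2 := by
  obtain ⟨T, hTsum⟩ := hT
  obtain ⟨i0, hi0⟩ := hsmem
  obtain ⟨b, hb⟩ := hBeven
  have hb2 : B / 2 = b := by omega
  have hsB : s ≤ B := by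
    rw [hB, ← hi0]
    exact Finset.single_le_sum (fun i _ => (hpos i).le) (mem_univ i0)
  have hM0 : 0 ≤ M := by
    rw [hM]
    have hsB' : (s:ℝ) ≤ (B:ℝ) := by exact_mod_cast hsB
    linarith
  set f : Fin n → ℝ := fun i => ((a i : ℤ) : ℝ) with hf
  set C₁ : Multiset ℝ := T.val.map f + {-M} with hC1
  set C₂ : Multiset ℝ := Tᶜ.val.map f + {-M} with hC2
  have hdis : Disjoint T Tᶜ := disjoint_compl_right
  have hun : T.disjUnion Tᶜ hdis = univ := by
    ext x; simp [Finset.mem_disjUnion]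
  have hval : T.val + Tᶜ.val = (univ : Finset (Fin n)).val := by
    calc T.val + Tᶜ.val = (T.disjUnion Tᶜ hdis).val := rfl
      _ = univ.val := by rw [hun]
  have hground : C₁ + C₂ = ground a M := by
    rw [hC1, hC2, ground]
    have : Multiset.replicate 2 (-M) = ({-M} : Multiset ℝ) + {-M} := rfl
    rw [this, ← hval, Multiset.map_add]
    abel
  have hnotmem : ∀ (U : Finset (Fin n)), -M ∉ U.val.map f := by
    intro U h
    obtain ⟨i, _, hi⟩ := Multiset.mem_map.mp h
    have h1 : (0:ℝ) < f i := by
      simp only [hf]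
      exact_mod_cast hpos i
    linarith
  have hc1 : C₁.count (-M) = 1 := by
    rw [hC1, Multiset.count_add, Multiset.count_eq_zero.mpr (hnotmem T),
      Multiset.count_singleton_self]
  have hc2 : C₂.count (-M) = 1 := by
    rw [hC2, Multiset.count_add, Multiset.count_eq_zero.mpr (hnotmem Tᶜ),
      Multiset.count_singleton_self]
  have hmapsum : ∀ (U : Finset (Fin n)), (U.val.map f).sum = ((∑ i ∈ U, a i : ℤ) : ℝ) := by
    intro U
    rw [Finset.sum]
    push_cast
    rw [Multiset.map_map]
    rfl
  have hcompl : ∑ i ∈ Tᶜ, a i = B / 2 := by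
    have h := Finset.sum_add_sum_compl T a
    rw [hTsum] at h
    rw [← hB] at h
    omega
  have hsum1 : C₁.sum = (s : ℝ) / 2 := by
    rw [hC1, Multiset.sum_add, hmapsum, hTsum, Multiset.sum_singleton, hM, hb2]
    have : (B : ℝ) = (b : ℝ) + b := by exact_mod_cast congrArg (Int.cast : ℤ → ℝ) hb
    rw [this]; ring
  have hsum2 : C₂.sum = (s : ℝ) / 2 := by
    rw [hC2, Multiset.sum_add, hmapsum, hcompl, Multiset.sum_singleton, hM, hb2]
    have : (B : ℝ) = (b : ℝ) + b := by exact_mod_cast congrArg (Int.cast : ℤ → ℝ) hb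
    rw [this]; ring
  refine ⟨⟨C₁, C₂, hground, hc1, hc2, hsum1, hsum2⟩, {C₁, C₂}, ⟨?_, ?_⟩, ?_⟩
  · simpa using hground
  · intro h
    rcases Multiset.mem_cons.mp h with h | h
    · rw [← h] at hc1; simp at hc1
    · rw [Multiset.mem_singleton] at h
      rw [← h] at hc2; simp at hc2
  · rw [roneObj]
    simp [hsum1, hsum2]
    ring_nf
    nlinarith [sq_nonneg ((s:ℝ))]
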